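/- Let ξ be a real random variable with density proportional to |x|^d exp(-|x|^q/2) restricted appropriately (equivalently, the radial profile of a d-dimensional exp(-|x|^q/2) density), q > 1, d ≥ 1. There is a constant c depending only on q and d such that for all r̂ ≥ c, P(|ξ| > 2r̂) ≤ (P(|ξ| > r̂))^2. -/

import Mathlib

set_option maxHeartbeats 1000000
open MeasureTheory Real Set

private lemma aux_integrableOn (q : ℝ) (hq : 1 < q) (a b : ℝ) (hb : 0 < b) (ha : -1 < a) :
    IntegrableOn (fun s : ℝ => s ^ a * Real.exp (-(b * s ^ q))) (Set.Ioi 0) := by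
  simpa [neg_mul] using integrableOn_rpow_mul_exp_neg_mul_rpow ha (zero_lt_one.trans hq) hb

private lemma aux_c0_pos (q : ℝ) (hq : 1 < q) (d : ℕ) (hd : 1 ≤ d) :
    0 < ∫ x : EuclideanSpace ℝ (Fin d), Real.exp (-(‖x‖ ^ q) / 2) := by
  have : NeZero d := ⟨by omega⟩
  have hnt : Nontrivial (EuclideanSpace ℝ (Fin d)) := inferInstance
  have h := integral_fun_norm_addHaar (volume : Measure (EuclideanSpace ℝ (Fin d)))
      (fun y : ℝ => Real.exp (-(y ^ q) / 2))
  rw [finrank_euclideanSpace_fin] at h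
  rw [h]
  have hInt : IntegrableOn (fun y : ℝ => y ^ (d - 1 : ℕ) • Real.exp (-(y ^ q) / 2)) (Ioi 0) := by
    have := integrableOn_rpow_mul_exp_neg_mul_rpow
      (show (-1 : ℝ) < ((d - 1 : ℕ) : ℝ) from neg_one_lt_zero.trans_le (Nat.cast_nonneg _))
      (zero_lt_one.trans hq) one_half_pos
    refine this.congr_fun (fun y hy => ?_) measurableSet_Ioi
    beta_reduce
    rw [Real.rpow_natCast, smul_eq_mul]
    congr 1
    ring
  have h1 : 0 < ∫ y in Ioi (0:ℝ), y ^ (d - 1 : ℕ) • Real.exp (-(y ^ q) / 2) := by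
    rw [setIntegral_pos_iff_support_of_nonneg_ae ?_ hInt]
    · have : Ioi (0:ℝ) ⊆ Function.support (fun y : ℝ => y ^ (d - 1 : ℕ) • Real.exp (-(y ^ q) / 2)) ∩ Ioi 0 := by
        intro y hy
        refine ⟨?_, hy⟩
        have : (0:ℝ) < y := hy
        simp only [Function.mem_support, smul_eq_mul]
        positivity
      refine lt_of_lt_of_le ?_ (measure_mono this)
      simp [Real.volume_Ioi]
    · filter_upwards [ae_restrict_mem measurableSet_Ioi] with y hy
      have : (0:ℝ) < y := hy
      simp only [smul_eq_mul]
      positivity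
  have hb : 0 < (volume (Metric.ball (0 : EuclideanSpace ℝ (Fin d)) 1)).toReal :=
    ENNReal.toReal_pos (Metric.measure_ball_pos volume 0 one_pos).ne' measure_ball_lt_top.ne
  have hdpos : 0 < d := hd
  positivity

/-- tail-squaring inequality for the radial profile of the d-dimensional
density exp(-|x|^q/2), q > 1: with T(ρ) = (c_d/c_0)∫_ρ^∞ s^d exp(-s^q/2) ds, where
c_d = 2π^{d/2}/Γ(d/2) and c_0 = ∫_{ℝ^d} exp(-|x|^q/2)dx, there is c = c(q,d) such that
T(2r̂) ≤ (T r̂)² for all r̂ ≥ c. -/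
theorem radial_tail_squaring
    (q : ℝ) (hq : 1 < q) (d : ℕ) (hd : 1 ≤ d) :
    ∃ c : ℝ, 0 < c ∧ ∀ rhat : ℝ, c ≤ rhat →
      (2 * Real.pi ^ ((d : ℝ) / 2) / Real.Gamma ((d : ℝ) / 2)) /
          (∫ x : EuclideanSpace ℝ (Fin d), Real.exp (-(‖x‖ ^ q) / 2)) *
        (∫ s in Set.Ioi (2 * rhat), s ^ (d : ℝ) * Real.exp (-(s ^ q) / 2))
      ≤ ((2 * Real.pi ^ ((d : ℝ) / 2) / Real.Gamma ((d : ℝ) / 2)) /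
          (∫ x : EuclideanSpace ℝ (Fin d), Real.exp (-(‖x‖ ^ q) / 2)) *
        (∫ s in Set.Ioi rhat, s ^ (d : ℝ) * Real.exp (-(s ^ q) / 2))) ^ 2 := by
  set K : ℝ := (2 * Real.pi ^ ((d : ℝ) / 2) / Real.Gamma ((d : ℝ) / 2)) /
      (∫ x : EuclideanSpace ℝ (Fin d), Real.exp (-(‖x‖ ^ q) / 2)) with hKdef
  have hK : 0 < K := by
    apply div_pos _ (aux_c0_pos q hq d hd)
    have h1 : 0 < Real.pi ^ ((d : ℝ) / 2) := Real.rpow_pos_of_pos Real.pi_pos _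
    have h2 : 0 < Real.Gamma ((d : ℝ) / 2) := Real.Gamma_pos_of_pos (by positivity)
    positivity
  -- constants
  set t : ℝ := (2 : ℝ) ^ q with htdef
  have ht : 2 < t := by
    calc (2:ℝ) = 2 ^ (1:ℝ) := (Real.rpow_one 2).symm
    _ < 2 ^ q := Real.rpow_lt_rpow_of_exponent_lt one_lt_two hq
  have ht0 : 0 < t := by linarith
  set θ : ℝ := (t - 2) / 4 with hθdef
  have hθ : 0 < θ := div_pos (by linarith) (by norm_num)
  set ε : ℝ := 1 / 2 - (1 + θ) / t with hεdef
  have hε : 0 < ε := by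
    have : ε = (t - 2) / (4 * t) := by
      rw [hεdef, hθdef]; field_simp; ring
    rw [this]; exact div_pos (by linarith) (by linarith)
  set lam : ℝ := (1 + θ / 2) ^ (1 / q : ℝ) with hlamdef
  have hθ2 : (1:ℝ) < 1 + θ / 2 := by linarith
  have hq0 : (0:ℝ) < q := by linarith
  have hlam1 : 1 < lam := by
    rw [hlamdef]
    exact Real.one_lt_rpow_iff_of_pos (by linarith) |>.2 (Or.inl ⟨hθ2, by positivity⟩)
  have hlamq : lam ^ q = 1 + θ / 2 := by
    rw [hlamdef, ← Real.rpow_mul (by linarith : (0:ℝ) ≤ 1 + θ / 2),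
      one_div_mul_cancel hq0.ne', Real.rpow_one]
  -- integrability facts
  have hI0 : IntegrableOn (fun s : ℝ => s ^ (d:ℝ) * Real.exp (-(s ^ q) / 2)) (Ioi 0) := by
    have := aux_integrableOn q hq (d:ℝ) (1/2) one_half_pos
      (neg_one_lt_zero.trans_le (Nat.cast_nonneg _))
    refine this.congr_fun (fun y hy => ?_) measurableSet_Ioi
    congr 1; ring
  have hJ0 : IntegrableOn (fun s : ℝ => s ^ (d:ℝ) * Real.exp (-(ε * s ^ q))) (Ioi 0) :=
    aux_integrableOn q hq (d:ℝ) ε hε (neg_one_lt_zero.trans_le (Nat.cast_nonneg _))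
  set A : ℝ := ∫ s in Ioi (0:ℝ), s ^ (d:ℝ) * Real.exp (-(ε * s ^ q)) with hAdef
  have hA0 : 0 ≤ A := setIntegral_nonneg measurableSet_Ioi fun x hx => by
    have : (0:ℝ) < x := hx
    positivity
  set B : ℝ := K * (lam - 1) ^ 2 with hBdef
  have hB : 0 < B := by
    have : 0 < lam - 1 := by linarith
    rw [hBdef]; positivity
  -- eventual bound
  have hev : ∀ᶠ r : ℝ in Filter.atTop, A * Real.exp (-(θ / 2) * r) < B := by
    have h1 : Filter.Tendsto (fun r : ℝ => A * Real.exp (-(θ / 2) * r))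
        Filter.atTop (nhds 0) := by
      have h2 : Filter.Tendsto (fun r : ℝ => (θ / 2) * r) Filter.atTop Filter.atTop :=
        Filter.Tendsto.const_mul_atTop (by positivity) Filter.tendsto_id
      have h3 := Real.tendsto_exp_neg_atTop_nhds_zero.comp h2
      have h4 := h3.const_mul A
      simpa [Function.comp, neg_mul, mul_zero] using h4
    exact h1.eventually_lt_const hB
  obtain ⟨c₁, hc₁⟩ := Filter.eventually_atTop.1 hev
  refine ⟨max 1 c₁, lt_max_of_lt_left one_pos, fun r hr => ?_⟩
  have hr1 : (1:ℝ) ≤ r := le_trans (le_max_left _ _) hr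
  have hr0 : (0:ℝ) < r := lt_of_lt_of_le one_pos hr1
  have hrB : A * Real.exp (-(θ / 2) * r ^ q) ≤ B := by
    have hrq : r ≤ r ^ q := by
      calc r = r ^ (1:ℝ) := (Real.rpow_one r).symm
      _ ≤ r ^ q := Real.rpow_le_rpow_of_exponent_le hr1 hq.le
    have : Real.exp (-(θ / 2) * r ^ q) ≤ Real.exp (-(θ / 2) * r) := by
      apply Real.exp_le_exp.2
      nlinarith
    calc A * Real.exp (-(θ / 2) * r ^ q) ≤ A * Real.exp (-(θ / 2) * r) :=
          mul_le_mul_of_nonneg_left this hA0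
    _ ≤ B := (hc₁ r (le_trans (le_max_right _ _) hr)).le
  -- upper bound on the tail at 2r
  have hup : (∫ s in Ioi (2 * r), s ^ (d:ℝ) * Real.exp (-(s ^ q) / 2))
      ≤ Real.exp (-((1 + θ) * r ^ q)) * A := by
    have hIr : IntegrableOn (fun s : ℝ => s ^ (d:ℝ) * Real.exp (-(s ^ q) / 2)) (Ioi (2*r)) :=
      hI0.mono_set (Ioi_subset_Ioi (by linarith))
    have hJr : IntegrableOn
        (fun s : ℝ => Real.exp (-((1 + θ) * r ^ q)) * (s ^ (d:ℝ) * Real.exp (-(ε * s ^ q))))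
        (Ioi (2*r)) :=
      (hJ0.mono_set (Ioi_subset_Ioi (by linarith))).const_mul _
    have h1 : (∫ s in Ioi (2 * r), s ^ (d:ℝ) * Real.exp (-(s ^ q) / 2))
        ≤ ∫ s in Ioi (2 * r),
            Real.exp (-((1 + θ) * r ^ q)) * (s ^ (d:ℝ) * Real.exp (-(ε * s ^ q))) := by
      refine setIntegral_mono_on hIr hJr measurableSet_Ioi fun s hs => ?_
      have hs2 : 2 * r < s := hs
      have hs0 : 0 < s := lt_trans (by linarith) hs2
      have hrs : r ^ q ≤ s ^ q / t := by
        have h5 : r ≤ s / 2 := by linarith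
        have h6 : r ^ q ≤ (s / 2) ^ q := Real.rpow_le_rpow hr0.le h5 hq0.le
        rwa [Real.div_rpow hs0.le (by norm_num : (0:ℝ) ≤ 2)] at h6
      have hexp : -(s ^ q) / 2 ≤ -((1 + θ) * r ^ q) + -(ε * s ^ q) := by
        have h7 : (1 + θ) * r ^ q ≤ (1 + θ) * (s ^ q / t) :=
          mul_le_mul_of_nonneg_left hrs (by linarith)
        have h8 : (1 + θ) * (s ^ q / t) + ε * s ^ q = s ^ q / 2 := by
          rw [hεdef]; field_simp; ring
        linarith
      calc s ^ (d:ℝ) * Real.exp (-(s ^ q) / 2)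
          ≤ s ^ (d:ℝ) * Real.exp (-((1 + θ) * r ^ q) + -(ε * s ^ q)) :=
            mul_le_mul_of_nonneg_left (Real.exp_le_exp.2 hexp) (by positivity)
      _ = Real.exp (-((1 + θ) * r ^ q)) * (s ^ (d:ℝ) * Real.exp (-(ε * s ^ q))) := by
            rw [Real.exp_add]; ring
    have h2 : (∫ s in Ioi (2 * r),
          Real.exp (-((1 + θ) * r ^ q)) * (s ^ (d:ℝ) * Real.exp (-(ε * s ^ q))))
        = Real.exp (-((1 + θ) * r ^ q)) *
            ∫ s in Ioi (2 * r), s ^ (d:ℝ) * Real.exp (-(ε * s ^ q)) :=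
      integral_const_mul _ _
    have h3 : (∫ s in Ioi (2 * r), s ^ (d:ℝ) * Real.exp (-(ε * s ^ q))) ≤ A := by
      refine setIntegral_mono_set hJ0 ?_ (HasSubset.Subset.eventuallyLE (Ioi_subset_Ioi (by linarith)))
      filter_upwards [ae_restrict_mem measurableSet_Ioi] with y hy
      have : (0:ℝ) < y := hy
      positivity
    calc (∫ s in Ioi (2 * r), s ^ (d:ℝ) * Real.exp (-(s ^ q) / 2))
        ≤ _ := h1
    _ = _ := h2
    _ ≤ Real.exp (-((1 + θ) * r ^ q)) * A :=
        mul_le_mul_of_nonneg_left h3 (Real.exp_nonneg _)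
  -- lower bound on the tail at r
  have hlow : (lam - 1) * Real.exp (-((1 + θ / 2) * r ^ q) / 2)
      ≤ ∫ s in Ioi r, s ^ (d:ℝ) * Real.exp (-(s ^ q) / 2) := by
    have hIioi : IntegrableOn (fun s : ℝ => s ^ (d:ℝ) * Real.exp (-(s ^ q) / 2)) (Ioi r) :=
      hI0.mono_set (Ioi_subset_Ioi hr0.le)
    have hIoc : IntegrableOn (fun s : ℝ => s ^ (d:ℝ) * Real.exp (-(s ^ q) / 2)) (Ioc r (lam * r)) :=
      hIioi.mono_set Ioc_subset_Ioi_self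
    have hconst : IntegrableOn (fun _ : ℝ => Real.exp (-((lam * r) ^ q) / 2)) (Ioc r (lam * r)) :=
      integrableOn_const measure_Ioc_lt_top.ne
    have h1 : (∫ s in Ioc r (lam * r), Real.exp (-((lam * r) ^ q) / 2))
        ≤ ∫ s in Ioc r (lam * r), s ^ (d:ℝ) * Real.exp (-(s ^ q) / 2) := by
      refine setIntegral_mono_on hconst hIoc measurableSet_Ioc fun s hs => ?_
      have hs1 : r < s := hs.1
      have hs2 : s ≤ lam * r := hs.2
      have hs0 : (1:ℝ) ≤ s := le_trans hr1 hs1.le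
      have hd1 : (1:ℝ) ≤ s ^ (d:ℝ) := Real.one_le_rpow hs0 (Nat.cast_nonneg _)
      have hee : Real.exp (-((lam * r) ^ q) / 2) ≤ Real.exp (-(s ^ q) / 2) := by
        apply Real.exp_le_exp.2
        have : s ^ q ≤ (lam * r) ^ q := Real.rpow_le_rpow (by linarith) hs2 hq0.le
        linarith
      calc Real.exp (-((lam * r) ^ q) / 2) ≤ Real.exp (-(s ^ q) / 2) := hee
      _ = 1 * Real.exp (-(s ^ q) / 2) := (one_mul _).symm
      _ ≤ s ^ (d:ℝ) * Real.exp (-(s ^ q) / 2) :=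
          mul_le_mul_of_nonneg_right hd1 (Real.exp_nonneg _)
    have h2 : (∫ s in Ioc r (lam * r), s ^ (d:ℝ) * Real.exp (-(s ^ q) / 2))
        ≤ ∫ s in Ioi r, s ^ (d:ℝ) * Real.exp (-(s ^ q) / 2) := by
      refine setIntegral_mono_set hIioi ?_ (HasSubset.Subset.eventuallyLE Ioc_subset_Ioi_self)
      filter_upwards [ae_restrict_mem measurableSet_Ioi] with y hy
      have : (0:ℝ) < y := lt_trans hr0 hy
      positivity
    have h3 : (∫ s in Ioc r (lam * r), Real.exp (-((lam * r) ^ q) / 2))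
        = (lam * r - r) * Real.exp (-((lam * r) ^ q) / 2) := by
      rw [setIntegral_const, measureReal_def, Real.volume_Ioc, ENNReal.toReal_ofReal (by nlinarith), smul_eq_mul]
    have h4 : (lam * r) ^ q = (1 + θ / 2) * r ^ q := by
      rw [Real.mul_rpow (by linarith) hr0.le, hlamq]
    have h5 : lam - 1 ≤ lam * r - r := by nlinarith
    calc (lam - 1) * Real.exp (-((1 + θ / 2) * r ^ q) / 2)
        ≤ (lam * r - r) * Real.exp (-((1 + θ / 2) * r ^ q) / 2) :=
          mul_le_mul_of_nonneg_right h5 (Real.exp_nonneg _)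
    _ = ∫ s in Ioc r (lam * r), Real.exp (-((lam * r) ^ q) / 2) := by rw [h3, h4]
    _ ≤ _ := h1.trans h2
  -- combine
  have hsplit : Real.exp (-((1 + θ) * r ^ q))
      = Real.exp (-(θ / 2) * r ^ q) * Real.exp (-((1 + θ / 2) * r ^ q)) := by
    rw [← Real.exp_add]; congr 1; ring
  have hsq : Real.exp (-((1 + θ / 2) * r ^ q))
      = Real.exp (-((1 + θ / 2) * r ^ q) / 2) ^ 2 := by
    rw [sq, ← Real.exp_add]; congr 1; ring
  have hRHSnn : 0 ≤ K * ((lam - 1) * Real.exp (-((1 + θ / 2) * r ^ q) / 2)) := by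
    apply mul_nonneg hK.le
    apply mul_nonneg (by linarith) (Real.exp_nonneg _)
  calc K * (∫ s in Ioi (2 * r), s ^ (d:ℝ) * Real.exp (-(s ^ q) / 2))
      ≤ K * (Real.exp (-((1 + θ) * r ^ q)) * A) := mul_le_mul_of_nonneg_left hup hK.le
  _ = (A * Real.exp (-(θ / 2) * r ^ q)) * (K * Real.exp (-((1 + θ / 2) * r ^ q))) := by
      rw [hsplit]; ring
  _ ≤ B * (K * Real.exp (-((1 + θ / 2) * r ^ q))) :=
      mul_le_mul_of_nonneg_right hrB (mul_nonneg hK.le (Real.exp_nonneg _))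
  _ = (K * ((lam - 1) * Real.exp (-((1 + θ / 2) * r ^ q) / 2))) ^ 2 := by
      rw [hBdef, hsq]; ring
  _ ≤ (K * ∫ s in Ioi r, s ^ (d:ℝ) * Real.exp (-(s ^ q) / 2)) ^ 2 :=
      pow_le_pow_left₀ hRHSnn (mul_le_mul_of_nonneg_left hlow hK.le) 2
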